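/- arXiv:1011.2431 — 5 statements merged into one kernel-verified Lean document; each statement's English description precedes it below -/
import Mathlib

section
/- Let s be an orthogonal transformation of a finite-dimensional real inner product space V having no nonzero fixed vectors. Then 1 - s is invertible, so the Cayley transform (1+s)(1-s)^{-1} is well-defined, and it is skew-symmetric with respect to the inner product. -/
open RealInnerProductSpace

/-- If `s` is an orthogonal transformation of a finite-dimensional real inner
product space with no nonzero fixed vectors, then `1 - s` is invertible and the Cayley
transform `(1 + s)(1 - s)⁻¹` is skew-symmetric with respect to the inner product. -/
theorem cayley_transform_skew
    {V : Type*} [NormedAddCommGroup V] [InnerProductSpace ℝ V] [FiniteDimensional ℝ V]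
    (s : V ≃ₗᵢ[ℝ] V) (hfix : ∀ v : V, s v = v → v = 0) :
    Function.Bijective (fun v : V => v - s v) ∧
      ∀ C : V →ₗ[ℝ] V, (∀ v : V, C v - s (C v) = v) →
        ∀ x y : V, ⟪C x + s (C x), y⟫ = -⟪x, C y + s (C y)⟫ := by
  constructor
  · have hT : (fun v : V => v - s v) =
        (LinearMap.id - s.toLinearEquiv.toLinearMap : V →ₗ[ℝ] V) := by
      ext v; simp
    rw [hT]
    have hinj : Function.Injective (LinearMap.id - s.toLinearEquiv.toLinearMap : V →ₗ[ℝ] V) := by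
      rw [← LinearMap.ker_eq_bot, LinearMap.ker_eq_bot']
      intro v hv
      simp only [LinearMap.sub_apply, LinearMap.id_apply] at hv
      have : s v = v := by
        have := sub_eq_zero.mp hv
        simpa using this.symm
      exact hfix v this
    exact ⟨hinj, (LinearMap.injective_iff_surjective).mp hinj⟩
  · intro C hC x y
    have hx : C x - s (C x) = x := hC x
    have hy : C y - s (C y) = y := hC y
    calc ⟪C x + s (C x), y⟫ = ⟪C x + s (C x), C y - s (C y)⟫ := by rw [hy]
      _ = -⟪C x - s (C x), C y + s (C y)⟫ := by
          rw [inner_add_left, inner_sub_right, inner_sub_right, inner_sub_left,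
            inner_add_right, inner_add_right, s.inner_map_map]
          ring
      _ = -⟪x, C y + s (C y)⟫ := by rw [hx]
end

section
/- Let γ₁, …, γ_{l'} be roots forming a linearly independent set in a Euclidean space, with the first n mutually orthogonal and the last l'-n mutually orthogonal, and let s = s_{γ₁}⋯s_{γ_n} · s_{γ_{n+1}}⋯s_{γ_{l'}} be the product of two involutions s¹, s². Then the restriction of s to the span h' of γ₁, …, γ_{l'} has no nonzero fixed vectors; equivalently 1 - s is invertible on h'. -/
open RealInnerProductSpace

/-- The reflection `s_γ(v) = v - 2(v,γ)/(γ,γ) γ` in the root `γ`. -/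
noncomputable def rootReflection {E : Type*} [NormedAddCommGroup E] [InnerProductSpace ℝ E]
    (γ : E) (v : E) : E :=
  v - (2 * ⟪v, γ⟫ / ⟪γ, γ⟫) • γ

private lemma foldr_comp_eq {α : Type*} (L : List (α → α)) (g : α → α) :
    L.foldr (· ∘ ·) g = (L.foldr (· ∘ ·) id) ∘ g := by
  induction L with
  | nil => rfl
  | cons a L ih => simp [List.foldr_cons, ih, Function.comp_assoc]

/-- Product of reflections in mutually orthogonal vectors. -/
private lemma block_formula {E : Type*} [NormedAddCommGroup E] [InnerProductSpace ℝ E] :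
    ∀ {m : ℕ} (δ : Fin m → E), (∀ i j : Fin m, i ≠ j → ⟪δ i, δ j⟫ = 0) → ∀ v : E,
      (List.ofFn fun i : Fin m => rootReflection (δ i)).foldr (· ∘ ·) id v
        = v - ∑ i, (2 * ⟪v, δ i⟫ / ⟪δ i, δ i⟫) • δ i := by
  intro m
  induction m with
  | zero => intro δ _ v; simp
  | succ m ih =>
    intro δ horth v
    rw [List.ofFn_succ, List.foldr_cons]
    have h1 : (List.ofFn fun i : Fin m => rootReflection (δ i.succ)).foldr (· ∘ ·) id v
        = v - ∑ i : Fin m, (2 * ⟪v, δ i.succ⟫ / ⟪δ i.succ, δ i.succ⟫) • δ i.succ :=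
      ih (fun i => δ i.succ)
        (fun i j hij => horth _ _ (fun h => hij (Fin.succ_injective _ h))) v
    set w : E := v - ∑ i : Fin m, (2 * ⟪v, δ i.succ⟫ / ⟪δ i.succ, δ i.succ⟫) • δ i.succ with hw
    have h2 : (rootReflection (δ 0) ∘
        (List.ofFn fun i : Fin m => rootReflection (δ i.succ)).foldr (· ∘ ·) id) v
        = rootReflection (δ 0) w := by rw [Function.comp_apply, h1]
    rw [h2]
    have hwin : ⟪w, δ 0⟫ = ⟪v, δ 0⟫ := by
      rw [hw, inner_sub_left, sum_inner]
      have : ∀ i : Fin m, ⟪(2 * ⟪v, δ i.succ⟫ / ⟪δ i.succ, δ i.succ⟫) • δ i.succ, δ 0⟫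
          = (0 : ℝ) := by
        intro i
        rw [real_inner_smul_left, horth i.succ 0 (Fin.succ_ne_zero i), mul_zero]
      rw [Finset.sum_congr rfl fun i _ => this i]
      simp
    rw [rootReflection, hwin, Fin.sum_univ_succ, hw]
    abel

/-- Let `γ₁, …, γ_{l'}` be linearly independent roots, the first `n` of which are
mutually orthogonal and the last `l' - n` of which are mutually orthogonal, and let
`s = s_{γ₁} ⋯ s_{γ_{l'}}` be the product of the two involutions. Then the restriction of `s`
to the span `h'` of the `γ_i` has no nonzero fixed vectors. -/
theorem product_of_two_involutions_no_fixed_vectors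
    {E : Type*} [NormedAddCommGroup E] [InnerProductSpace ℝ E]
    {l' : ℕ} (n : ℕ) (hn : n ≤ l') (γ : Fin l' → E)
    (hind : LinearIndependent ℝ γ)
    (horth₁ : ∀ i j : Fin l', i ≠ j → i.val < n → j.val < n → ⟪γ i, γ j⟫ = 0)
    (horth₂ : ∀ i j : Fin l', i ≠ j → n ≤ i.val → n ≤ j.val → ⟪γ i, γ j⟫ = 0)
    (s : E → E)
    (hs : s = (List.ofFn fun i : Fin l' => rootReflection (γ i)).foldr (· ∘ ·) id) :
    ∀ v ∈ Submodule.span ℝ (Set.range γ), s v = v → v = 0 := by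
  intro v hv hfix
  set k := l' - n with hk
  have hl : l' = n + k := (Nat.add_sub_cancel' hn).symm
  -- the two blocks
  set e : Fin (n + k) → Fin l' := fun i => Fin.cast hl.symm i with he
  have hecast : ∀ i : Fin (n + k), (e i).val = i.val := fun i => rfl
  set γ₁ : Fin n → E := fun i => γ (e (Fin.castAdd k i)) with hγ₁
  set γ₂ : Fin k → E := fun i => γ (e (Fin.natAdd n i)) with hγ₂
  -- split the foldr
  have hsplit : ∀ u : E, s u =
      (List.ofFn fun i : Fin n => rootReflection (γ₁ i)).foldr (· ∘ ·) id
        ((List.ofFn fun i : Fin k => rootReflection (γ₂ i)).foldr (· ∘ ·) id u) := by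
    intro u
    rw [hs, List.ofFn_congr hl, List.ofFn_add, List.foldr_append, foldr_comp_eq]
    rfl
  -- orthogonality within each block
  have horthb₁ : ∀ i j : Fin n, i ≠ j → ⟪γ₁ i, γ₁ j⟫ = 0 := by
    intro i j hij
    refine horth₁ _ _ ?_ (by simpa [hecast] using i.isLt) (by simpa [hecast] using j.isLt)
    intro h
    exact hij (Fin.castAdd_injective _ _ ((Fin.cast_injective _) h))
  have horthb₂ : ∀ i j : Fin k, i ≠ j → ⟪γ₂ i, γ₂ j⟫ = 0 := by
    intro i j hij
    refine horth₂ _ _ ?_ (by simp [hecast, Fin.natAdd]) (by simp [hecast, Fin.natAdd])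
    intro h
    have hval := congrArg Fin.val ((Fin.cast_injective _) h)
    simp only [Fin.natAdd] at hval
    exact hij (Fin.ext (Nat.add_left_cancel hval))
  -- apply the block formula
  set w : E := v - ∑ i, (2 * ⟪v, γ₂ i⟫ / ⟪γ₂ i, γ₂ i⟫) • γ₂ i with hwdef
  have hB : (List.ofFn fun i : Fin k => rootReflection (γ₂ i)).foldr (· ∘ ·) id v = w :=
    block_formula γ₂ horthb₂ v
  have hA : (List.ofFn fun i : Fin n => rootReflection (γ₁ i)).foldr (· ∘ ·) id w
      = w - ∑ i, (2 * ⟪w, γ₁ i⟫ / ⟪γ₁ i, γ₁ i⟫) • γ₁ i := block_formula γ₁ horthb₁ w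
  have hsv : s v = v - ∑ i, (2 * ⟪w, γ₁ i⟫ / ⟪γ₁ i, γ₁ i⟫) • γ₁ i
      - ∑ i, (2 * ⟪v, γ₂ i⟫ / ⟪γ₂ i, γ₂ i⟫) • γ₂ i := by
    rw [hsplit v, hB, hA, hwdef]; abel
  -- derive the vanishing linear combination
  have hzero : (∑ i, (2 * ⟪w, γ₁ i⟫ / ⟪γ₁ i, γ₁ i⟫) • γ₁ i)
      + ∑ i, (2 * ⟪v, γ₂ i⟫ / ⟪γ₂ i, γ₂ i⟫) • γ₂ i = 0 := by
    have := hsv.symm.trans hfix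
    have h := sub_eq_zero.mpr this.symm
    rw [show v - (v - ∑ i, (2 * ⟪w, γ₁ i⟫ / ⟪γ₁ i, γ₁ i⟫) • γ₁ i
      - ∑ i, (2 * ⟪v, γ₂ i⟫ / ⟪γ₂ i, γ₂ i⟫) • γ₂ i)
      = (∑ i, (2 * ⟪w, γ₁ i⟫ / ⟪γ₁ i, γ₁ i⟫) • γ₁ i)
      + ∑ i, (2 * ⟪v, γ₂ i⟫ / ⟪γ₂ i, γ₂ i⟫) • γ₂ i by abel] at h
    exact h
  -- coefficients as a function on Fin l'
  classical
  set g : Fin l' → ℝ := fun i =>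
    if i.val < n then 2 * ⟪w, γ i⟫ / ⟪γ i, γ i⟫ else 2 * ⟪v, γ i⟫ / ⟪γ i, γ i⟫ with hg
  have hsum : ∑ i, g i • γ i = 0 := by
    have hre : ∑ i : Fin l', g i • γ i = ∑ i : Fin (n + k), g (e i) • γ (e i) :=
      (Fintype.sum_equiv (finCongr hl) _ _ (fun i => rfl))
    rw [hre, Fin.sum_univ_add]
    have h1 : ∀ i : Fin n, g (e (Fin.castAdd k i)) • γ (e (Fin.castAdd k i))
        = (2 * ⟪w, γ₁ i⟫ / ⟪γ₁ i, γ₁ i⟫) • γ₁ i := by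
      intro i
      have : (e (Fin.castAdd k i)).val < n := by simpa [hecast] using i.isLt
      simp [hg, this, hγ₁]
    have h2 : ∀ i : Fin k, g (e (Fin.natAdd n i)) • γ (e (Fin.natAdd n i))
        = (2 * ⟪v, γ₂ i⟫ / ⟪γ₂ i, γ₂ i⟫) • γ₂ i := by
      intro i
      have : ¬ (e (Fin.natAdd n i)).val < n := by simp [hecast, Fin.natAdd]
      simp [hg, this, hγ₂]
    rw [Finset.sum_congr rfl fun i _ => h1 i, Finset.sum_congr rfl fun i _ => h2 i]
    exact hzero
  have hgz : ∀ i, g i = 0 := Fintype.linearIndependent_iff.mp hind g hsum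
  have hinnself : ∀ i : Fin l', ⟪γ i, γ i⟫ ≠ (0 : ℝ) := fun i =>
    inner_self_ne_zero.mpr (hind.ne_zero i)
  have hcoeff : ∀ (u : E) (i : Fin l'), 2 * ⟪u, γ i⟫ / ⟪γ i, γ i⟫ = 0 → ⟪u, γ i⟫ = 0 := by
    intro u i h
    rcases div_eq_zero_iff.mp h with h' | h'
    · have := mul_eq_zero.mp h'
      rcases this with h'' | h''
      · norm_num at h''
      · exact h''
    · exact absurd h' (hinnself i)
  -- inner products with the second block vanish
  have hv₂ : ∀ i : Fin l', n ≤ i.val → ⟪v, γ i⟫ = 0 := by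
    intro i hi
    have := hgz i
    simp only [hg, if_neg (Nat.not_lt.mpr hi)] at this
    exact hcoeff v i this
  -- hence w = v
  have hwv : w = v := by
    rw [hwdef]
    have : ∀ i : Fin k, (2 * ⟪v, γ₂ i⟫ / ⟪γ₂ i, γ₂ i⟫) • γ₂ i = 0 := by
      intro i
      have h0 : ⟪v, γ₂ i⟫ = 0 := hv₂ _ (by simp [hγ₂, hecast, Fin.natAdd])
      rw [hγ₂] at h0 ⊢
      rw [h0]; simp
    rw [Finset.sum_congr rfl fun i _ => this i]
    simp
  -- inner products with the first block vanish too
  have hv₁ : ∀ i : Fin l', i.val < n → ⟪v, γ i⟫ = 0 := by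
    intro i hi
    have := hgz i
    simp only [hg, if_pos hi] at this
    have := hcoeff w i this
    rwa [hwv] at this
  have hvall : ∀ i : Fin l', ⟪v, γ i⟫ = 0 := by
    intro i
    rcases lt_or_ge i.val n with h | h
    · exact hv₁ i h
    · exact hv₂ i h
  -- conclude v = 0
  obtain ⟨c, hc⟩ := (Submodule.mem_span_range_iff_exists_fun ℝ).mp hv
  have : ⟪v, v⟫ = (0 : ℝ) := by
    nth_rewrite 2 [← hc]
    rw [inner_sum]
    refine Finset.sum_eq_zero fun i _ => ?_
    rw [real_inner_smul_right, hvall i, mul_zero]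
  exact inner_self_eq_zero.mp this
end

section
/- With γ₁, …, γ_{l'} as above and s = s_{γ₁} ⋯ s_{γ_{l'}} (product of reflections in the given order), the matrix elements of the Cayley transform C = (1+s)(1-s)^{-1} P_{h'} in the basis γ₁, …, γ_{l'} are given by (C γ_i, γ_j) = ε_{ij} (γ_i, γ_j), where ε_{ij} = -1 if i < j, ε_{ij} = 0 if i = j, and ε_{ij} = 1 if i > j. -/
open RealInnerProductSpace

/-- The sign `ε_{ij}`: `-1` if `i < j`, `0` if `i = j`, `1` if `i > j`. -/
def epsSign {l' : ℕ} (i j : Fin l') : ℝ :=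
  if i < j then -1 else if i = j then 0 else 1

section Aux
variable {E : Type*} [NormedAddCommGroup E] [InnerProductSpace ℝ E]

noncomputable def refLM (g : E) : E →ₗ[ℝ] E where
  toFun := rootReflection g
  map_add' v w := by
    simp only [rootReflection, inner_add_left]
    rw [show 2 * (⟪v, g⟫ + ⟪w, g⟫) / ⟪g, g⟫ = 2 * ⟪v, g⟫ / ⟪g, g⟫ + 2 * ⟪w, g⟫ / ⟪g, g⟫ by ring,
      add_smul]
    abel
  map_smul' r v := by
    simp only [rootReflection, real_inner_smul_left, RingHom.id_apply, smul_sub]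
    rw [show 2 * (r * ⟪v, g⟫) / ⟪g, g⟫ = r * (2 * ⟪v, g⟫ / ⟪g, g⟫) by ring, mul_smul]

noncomputable def evalList (L : List E) : E → E := (L.map rootReflection).foldr (· ∘ ·) id

@[simp] lemma evalList_nil (y : E) : evalList ([] : List E) y = y := rfl
@[simp] lemma evalList_cons (g : E) (L : List E) (y : E) :
    evalList (g :: L) y = rootReflection g (evalList L y) := rfl

noncomputable def evalLM (L : List E) : E →ₗ[ℝ] E := (L.map refLM).foldr (· ∘ₗ ·) LinearMap.id

lemma evalLM_apply (L : List E) (y : E) : evalLM L y = evalList L y := by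
  induction L with
  | nil => rfl
  | cons g L ih =>
    show refLM g (evalLM L y) = rootReflection g (evalList L y)
    rw [ih]; rfl

lemma diff_mem_span (L : List E) (y : E) :
    y - evalList L y ∈ Submodule.span ℝ {x : E | x ∈ L} := by
  induction L with
  | nil => simp
  | cons g L ih =>
    have h1 : y - evalList L y ∈ Submodule.span ℝ {x : E | x ∈ g :: L} :=
      Submodule.span_mono (fun x hx => List.mem_cons_of_mem g hx) ih
    have h2 : g ∈ ({x : E | x ∈ g :: L} : Set E) := List.mem_cons_self
    have heq : y - evalList (g :: L) y
        = (y - evalList L y) + (2 * ⟪evalList L y, g⟫ / ⟪g, g⟫) • g := by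
      rw [evalList_cons]; simp [rootReflection]; abel
    rw [heq]
    exact Submodule.add_mem _ h1 (Submodule.smul_mem _ _ (Submodule.subset_span h2))

lemma coeff_lemma (L : List E) (y : E) : ∃ c : Fin L.length → ℝ,
    (∀ k : Fin L.length,
      2 * ⟪evalList (L.drop ((k : ℕ) + 1)) y, L.get k⟫ = c k * ⟪L.get k, L.get k⟫) ∧
    (∀ k : ℕ, k ≤ L.length →
      y - evalList (L.drop k) y = ∑ m : Fin L.length, if k ≤ (m : ℕ) then c m • L.get m else 0) := by
  induction L with
  | nil =>
    refine ⟨Fin.elim0, fun k => k.elim0, fun k hk => ?_⟩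
    obtain rfl : k = 0 := Nat.le_zero.mp hk
    simp
  | cons g L ih =>
    obtain ⟨c, hc1, hc2⟩ := ih
    set a : ℝ := 2 * ⟪evalList L y, g⟫ / ⟪g, g⟫ with ha
    refine ⟨Fin.cases a c, ?_, ?_⟩
    · intro k
      refine Fin.cases ?_ ?_ k
      · simp only [Fin.val_zero, Nat.zero_add, List.drop_succ_cons, List.drop_zero,
          List.get_cons_zero, Fin.cases_zero]
        by_cases hg : ⟪g, g⟫ = (0 : ℝ)
        · have : g = 0 := by rwa [inner_self_eq_zero] at hg
          simp [this]
        · rw [ha, div_mul_cancel₀ _ hg]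
      · intro m
        simpa using hc1 m
    · intro k hk
      match k with
      | 0 =>
        have h0 : y - evalList L y = ∑ m : Fin L.length, c m • L.get m := by
          simpa using hc2 0 (Nat.zero_le _)
        simp only [List.drop_zero, List.length_cons]
        rw [evalList_cons, show rootReflection g (evalList L y) = evalList L y - a • g from rfl,
          Fin.sum_univ_succ]
        simp only [Fin.cases_zero, Fin.cases_succ, List.get_cons_zero, List.get_cons_succ,
          Fin.val_zero, Fin.val_succ, Nat.zero_le, if_true]
        have hsum : (∑ x : Fin L.length, c x • (g :: L).get x.succ)
            = ∑ x : Fin L.length, c x • L.get x := rfl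
        rw [hsum, ← h0]
        abel
      | (j + 1) =>
        have hj : j ≤ L.length := by simpa using hk
        have h0 := hc2 j hj
        simp only [List.drop_succ_cons, List.length_cons]
        rw [h0, Fin.sum_univ_succ]
        simp only [Fin.cases_zero, Fin.cases_succ, Fin.val_zero, Fin.val_succ,
          List.get_cons_succ]
        split_ifs with hc0
        · omega
        have hite : (if j + 1 ≤ 0 then a • (g :: L).get 0 else (0:E)) = 0 := if_neg hc0
        erw [hite, zero_add]
        refine Finset.sum_congr rfl fun m _ => ?_
        simp only [Nat.add_le_add_iff_right]
        rfl

end Aux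

/-- Lemma 6.2 of the paper: with `s = s_{γ₁} ⋯ s_{γ_{l'}}` a product of
reflections in linearly independent roots, acting on `h' = span(γ₁,…,γ_{l'})` without nonzero
fixed vectors, the Cayley transform `C = (1+s)(1-s)⁻¹ P_{h'}` satisfies
`(C γ_i, γ_j) = ε_{ij} (γ_i, γ_j)`.  Here `C γ_i = y + s y`, where `y ∈ h'` is the (unique)
solution of `y - s y = γ_i`. -/
theorem cayley_transform_matrix_elements
    {E : Type*} [NormedAddCommGroup E] [InnerProductSpace ℝ E]
    {l' : ℕ} (γ : Fin l' → E) (hind : LinearIndependent ℝ γ)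
    (s : E → E)
    (hs : s = (List.ofFn fun i : Fin l' => rootReflection (γ i)).foldr (· ∘ ·) id)
    (hnofix : ∀ v ∈ Submodule.span ℝ (Set.range γ), s v = v → v = 0) :
    ∀ i j : Fin l',
      (∃ y ∈ Submodule.span ℝ (Set.range γ), y - s y = γ i) ∧
      (∀ y ∈ Submodule.span ℝ (Set.range γ), y - s y = γ i →
        ⟪y + s y, γ j⟫ = epsSign i j * ⟪γ i, γ j⟫) := by
  classical
  set L : List E := List.ofFn γ with hL
  have hs' : s = evalList L := by
    rw [hs, hL, evalList, List.map_ofFn]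
    rfl
  have hlen : L.length = l' := List.length_ofFn
  have hget : ∀ m : Fin L.length, L.get m = γ (Fin.cast hlen m) := fun m =>
    List.get_ofFn γ m
  have hsets : {x : E | x ∈ L} = Set.range γ := by
    ext x; simp [hL, List.mem_ofFn]
  set V := Submodule.span ℝ (Set.range γ) with hV
  intro i j
  constructor
  · -- existence
    have hmaps : ∀ v ∈ V, v - evalLM L v ∈ V := by
      intro v hv
      rw [evalLM_apply]
      have := diff_mem_span L v
      rwa [hsets] at this
    set T : V →ₗ[ℝ] V := LinearMap.restrict (LinearMap.id - evalLM L)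
      (fun x hx => by simpa using hmaps x hx) with hT
    have hTinj : Function.Injective T := by
      rw [← LinearMap.ker_eq_bot, LinearMap.ker_eq_bot']
      intro x hx
      have hx' : (x : E) - evalLM L x = 0 := by
        have := congrArg (Subtype.val) hx
        simpa [hT, LinearMap.restrict_apply] using this
      have hfix : s (x : E) = x := by
        rw [hs', ← evalLM_apply]
        have := sub_eq_zero.mp hx'
        exact this.symm
      exact Subtype.ext (hnofix x x.2 hfix)
    haveI : FiniteDimensional ℝ V := FiniteDimensional.span_of_finite ℝ (Set.finite_range γ)
    have hTsurj : Function.Surjective T := (LinearMap.injective_iff_surjective).mp hTinj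
    obtain ⟨z, hz⟩ := hTsurj ⟨γ i, Submodule.subset_span ⟨i, rfl⟩⟩
    refine ⟨z, z.2, ?_⟩
    have := congrArg (Subtype.val) hz
    simp only [hT, LinearMap.restrict_apply, LinearMap.sub_apply, LinearMap.id_apply] at this
    rw [hs', ← evalLM_apply]
    exact this
  · -- matrix element
    intro y hyV hy
    obtain ⟨c, hc1, hc2⟩ := coeff_lemma L y
    set d : Fin l' → ℝ := fun m => c (Fin.cast hlen.symm m) with hd
    have hcast : ∀ m : Fin L.length, Fin.cast hlen.symm (Fin.cast hlen m) = m := by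
      intro m; ext; simp
    have hcast' : ∀ m : Fin l', Fin.cast hlen (Fin.cast hlen.symm m) = m := by
      intro m; ext; simp
    -- reindexed sums
    have hsum_reindex : ∀ (f : ℕ → Prop) [DecidablePred f],
        (∑ m : Fin L.length, if f (m : ℕ) then c m • L.get m else 0)
          = ∑ m : Fin l', if f (m : ℕ) then d m • γ m else 0 := by
      intro f _
      refine Fintype.sum_equiv (finCongr hlen) _ _ fun m => ?_
      simp only [finCongr_apply, hget, hd, hcast]
      rfl
    -- the coefficients are δ_{mi}
    have hgi : γ i = ∑ m : Fin l', d m • γ m := by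
      have h0 := hc2 0 (Nat.zero_le _)
      simp only [List.drop_zero, Nat.zero_le, if_true] at h0
      rw [← hs'] at h0
      rw [← hy, h0]
      have := hsum_reindex (fun _ => True)
      simpa using this
    have hdelta : ∀ m : Fin l', d m = if m = i then 1 else 0 := by
      have h0 : ∑ m : Fin l', (d m - if m = i then 1 else 0) • γ m = 0 := by
        simp only [sub_smul, Finset.sum_sub_distrib]
        rw [← hgi]
        have hss : (∑ x : Fin l', (if x = i then (1:ℝ) else 0) • γ x) = γ i := by
          simp [ite_smul]
        rw [hss]
        simp
      intro m
      have := Fintype.linearIndependent_iff.mp hind _ h0 m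
      linarith [this]
    -- the key inner product relation for index j
    set k : Fin L.length := Fin.cast hlen.symm j with hk
    have hkval : (k : ℕ) = (j : ℕ) := rfl
    have h1 := hc1 k
    rw [hget k, hcast'] at h1
    have h2 := hc2 ((j : ℕ) + 1) (by rw [hlen]; exact j.isLt)
    rw [hsum_reindex (fun n => (j : ℕ) + 1 ≤ n)] at h2
    have hsum2 : (∑ m : Fin l', if (j : ℕ) + 1 ≤ (m : ℕ) then d m • γ m else 0)
        = if (j : ℕ) + 1 ≤ (i : ℕ) then γ i else 0 := by
      rw [Finset.sum_eq_single i]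
      · rw [hdelta i]
        simp
      · intro m _ hm
        rw [hdelta m, if_neg hm]
        simp
      · intro h
        exact absurd (Finset.mem_univ i) h
    rw [hsum2] at h2
    have hdrop : evalList (L.drop ((j : ℕ) + 1)) y
        = y - (if (j : ℕ) + 1 ≤ (i : ℕ) then γ i else 0) := by
      rw [← h2]; abel
    have hck : c k = d j := rfl
    rw [hkval, hdrop, hck, hdelta j] at h1
    -- express goal
    have hsy : s y = y - γ i := by rw [← hy]; abel
    have hgoal : ⟪y + s y, γ j⟫ = 2 * ⟪y, γ j⟫ - ⟪γ i, γ j⟫ := by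
      rw [hsy]
      rw [inner_add_left, inner_sub_left]
      ring
    rw [hgoal]
    rcases lt_trichotomy i j with hij | hij | hij
    · have hcond : ¬ ((j : ℕ) + 1 ≤ (i : ℕ)) := by
        have : (i : ℕ) < (j : ℕ) := hij
        omega
      rw [if_neg hcond, if_neg (by exact fun h => absurd h (Fin.ne_of_lt hij).symm)] at h1
      simp only [sub_zero] at h1
      have hy0 : ⟪y, γ j⟫ = 0 := by linarith
      rw [hy0, epsSign, if_pos hij]
      ring
    · subst hij
      have hcond : ¬ ((i : ℕ) + 1 ≤ (i : ℕ)) := by omega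
      rw [if_neg hcond, if_pos rfl] at h1
      simp only [sub_zero, one_mul] at h1
      rw [epsSign, if_neg (lt_irrefl i), if_pos rfl]
      linarith
    · have hcond : (j : ℕ) + 1 ≤ (i : ℕ) := hij
      rw [if_pos hcond,
        if_neg (show ¬ j = i from fun h => by subst h; exact absurd hij (lt_irrefl j))] at h1
      rw [inner_sub_left] at h1
      have hyj : ⟪y, γ j⟫ = ⟪γ i, γ j⟫ := by linarith
      rw [hyj]
      have heps : epsSign i j = 1 := by
        rw [epsSign, if_neg (not_lt_of_gt hij),
          if_neg (show ¬ i = j from fun h => by subst h; exact absurd hij (lt_irrefl i))]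
      rw [heps]
      ring
end

section
/- Let s = s_{γ₁} ⋯ s_{γ_{l'}} be a product of reflections in linearly independent roots γ_i, acting on the span h' without nonzero fixed vectors, and let C = (1+s)(1-s)^{-1} P_{h'} denote its Cayley transform composed with orthogonal projection onto h'. Then the bilinear form B(x,y) = (x,y) + (Cx, y) on h' satisfies B(γ_i, γ_j) = 0 for all i < j and B(γ_i,γ_i) = (γ_i,γ_i); in particular B is 'upper-triangular' in the basis γ₁,…,γ_{l'}. -/
open RealInnerProductSpace

section Aux

set_option linter.unusedSectionVars false

variable {E : Type*} [NormedAddCommGroup E] [InnerProductSpace ℝ E]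

/-- Composition of root reflections along a list of roots. -/
noncomputable def Scomp (L : List E) : E → E := (L.map rootReflection).foldr (· ∘ ·) id

lemma Scomp_cons (a : E) (L : List E) (v : E) :
    Scomp (a :: L) v = rootReflection a (Scomp L v) := rfl

lemma Scomp_append (L1 L2 : List E) (v : E) :
    Scomp (L1 ++ L2) v = Scomp L1 (Scomp L2 v) := by
  induction L1 with
  | nil => rfl
  | cons a t ih => simp only [List.cons_append, Scomp_cons, ih]

lemma refl_inner (a v w : E) : ⟪rootReflection a v, rootReflection a w⟫ = ⟪v, w⟫ := by
  unfold rootReflection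
  by_cases h : a = 0
  · simp [h]
  · have ha : ⟪a, a⟫ ≠ 0 := (inner_self_ne_zero (𝕜 := ℝ)).mpr h
    simp only [inner_sub_left, inner_sub_right, real_inner_smul_left, real_inner_smul_right]
    rw [real_inner_comm a w, real_inner_comm a v]
    field_simp
    ring

lemma Scomp_inner (L : List E) (v w : E) : ⟪Scomp L v, Scomp L w⟫ = ⟪v, w⟫ := by
  induction L with
  | nil => rfl
  | cons a t ih => rw [Scomp_cons, Scomp_cons, refl_inner, ih]

lemma Scomp_sub_mem (L : List E) (v : E) :
    Scomp L v - v ∈ Submodule.span ℝ {x | x ∈ L} := by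
  induction L with
  | nil => simp [Scomp]
  | cons a t ih =>
    have h1 : Scomp (a :: t) v - v
        = (-(2 * ⟪Scomp t v, a⟫ / ⟪a, a⟫)) • a + (Scomp t v - v) := by
      rw [Scomp_cons]; unfold rootReflection; module
    rw [h1]
    refine Submodule.add_mem _ (Submodule.smul_mem _ _ ?_) ?_
    · exact Submodule.subset_span (by simp)
    · exact Submodule.span_mono (fun x hx => by simp at hx ⊢; tauto) ih

lemma fixed_orthogonal : ∀ (L : List E) (y : E),
    (∀ (p : List E) (a : E) (q : List E), L = p ++ a :: q →
      a ∉ Submodule.span ℝ {x | x ∈ q}) →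
    Scomp L y = y → ∀ b ∈ L, ⟪y, b⟫ = 0 := by
  intro L
  induction L with
  | nil => intro y _ _ b hb; simp at hb
  | cons a t ih =>
    intro y H hfix b hb
    have ha : a ∉ Submodule.span ℝ {x | x ∈ t} := H [] a t rfl
    have ha0 : a ≠ 0 := fun h => ha (h ▸ Submodule.zero_mem _)
    have haa : ⟪a, a⟫ ≠ 0 := (inner_self_ne_zero (𝕜 := ℝ)).mpr ha0
    have hm := Scomp_sub_mem t y
    set c := 2 * ⟪Scomp t y, a⟫ / ⟪a, a⟫ with hc_def
    have h2 : Scomp t y - y = c • a := by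
      have h1 : rootReflection a (Scomp t y) = y := hfix
      unfold rootReflection at h1
      nth_rewrite 2 [← h1]; module
    have hc : c = 0 := by
      by_contra hc
      apply ha
      have : a = c⁻¹ • (Scomp t y - y) := by
        rw [h2, smul_smul, inv_mul_cancel₀ hc, one_smul]
      rw [this]
      exact Submodule.smul_mem _ _ hm
    have hfix' : Scomp t y = y := by
      have := h2; rw [hc, zero_smul, sub_eq_zero] at this; exact this
    have hya : ⟪y, a⟫ = 0 := by
      rw [hc_def, hfix'] at hc
      field_simp at hc
      linarith
    rcases List.mem_cons.mp hb with rfl | hb'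
    · exact hya
    · exact ih y (fun p a' q h => H (a :: p) a' q (by rw [h]; rfl)) hfix' b hb'

lemma mem_take_ofFn {l' : ℕ} (γ : Fin l' → E) (t : ℕ) (x : E)
    (hx : x ∈ (List.ofFn γ).take t) : ∃ k : Fin l', (k : ℕ) < t ∧ γ k = x := by
  rw [List.mem_iff_getElem] at hx
  obtain ⟨m, hm, hx⟩ := hx
  simp only [List.length_take, List.length_ofFn] at hm
  have hm1 : m < t := lt_of_lt_of_le hm (min_le_left _ _)
  have hm2 : m < l' := lt_of_lt_of_le hm (min_le_right _ _)
  refine ⟨⟨m, hm2⟩, hm1, ?_⟩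
  rw [← hx, List.getElem_take, List.getElem_ofFn]

lemma mem_drop_ofFn {l' : ℕ} (γ : Fin l' → E) (t : ℕ) (x : E)
    (hx : x ∈ (List.ofFn γ).drop t) : ∃ k : Fin l', t ≤ (k : ℕ) ∧ γ k = x := by
  rw [List.mem_iff_getElem] at hx
  obtain ⟨m, hm, hx⟩ := hx
  simp only [List.length_drop, List.length_ofFn] at hm
  refine ⟨⟨t + m, by omega⟩, Nat.le_add_right t m, ?_⟩
  rw [← hx, List.getElem_drop, List.getElem_ofFn]

end Aux

/-- with `s = s_{γ₁} ⋯ s_{γ_{l'}}` a product of reflections in linearly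
independent roots, acting without nonzero fixed vectors on `h' = span(γ_i)`, the bilinear
form `B(x,y) = (x,y) + (Cx,y)` (where `C = (1+s)(1-s)⁻¹ P_{h'}`, so `C γ_i = y + s y` with
`y ∈ h'`, `y - s y = γ_i`) satisfies `B(γ_i,γ_j) = 0` for `i < j` and
`B(γ_i,γ_i) = (γ_i,γ_i)`. -/
theorem twisted_form_upper_triangular
    {E : Type*} [NormedAddCommGroup E] [InnerProductSpace ℝ E]
    {l' : ℕ} (γ : Fin l' → E) (hind : LinearIndependent ℝ γ)
    (s : E → E)
    (hs : s = (List.ofFn fun i : Fin l' => rootReflection (γ i)).foldr (· ∘ ·) id)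
    (hnofix : ∀ v ∈ Submodule.span ℝ (Set.range γ), s v = v → v = 0) :
    (∀ i j : Fin l', i < j →
      ∀ y ∈ Submodule.span ℝ (Set.range γ), y - s y = γ i →
        ⟪γ i, γ j⟫ + ⟪y + s y, γ j⟫ = 0) ∧
    (∀ i : Fin l',
      ∀ y ∈ Submodule.span ℝ (Set.range γ), y - s y = γ i →
        ⟪γ i, γ i⟫ + ⟪y + s y, γ i⟫ = ⟪γ i, γ i⟫) := by
  have hsS : s = Scomp (List.ofFn γ) := by
    rw [hs]; unfold Scomp; rw [List.map_ofFn]; rfl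
  have isom : ∀ v w : E, ⟪s v, s w⟫ = ⟪v, w⟫ := by
    intro v w; rw [hsS]; exact Scomp_inner _ _ _
  constructor
  · -- upper-triangular part
    intro i j hij y hy hy'
    set L : List E := List.ofFn γ with hL
    set L1 : List E := L.take ((i : ℕ) + 1) with hL1
    set L2 : List E := L.drop ((i : ℕ) + 1) with hL2
    have hsplit : L1 ++ L2 = L := List.take_append_drop _ _
    set z : E := Scomp L2 y with hz
    -- y - z lies in the span of the late roots
    have hyz2 : y - z ∈ Submodule.span ℝ (γ '' {k : Fin l' | (i : ℕ) < (k : ℕ)}) := by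
      have hmem := Scomp_sub_mem L2 y
      have hsub : {x : E | x ∈ L2} ⊆ γ '' {k : Fin l' | (i : ℕ) < (k : ℕ)} := by
        intro x hx
        obtain ⟨k, hk, rfl⟩ := mem_drop_ofFn γ ((i : ℕ) + 1) x hx
        exact ⟨k, by simpa using by omega, rfl⟩
      have h1 : z - y ∈ Submodule.span ℝ (γ '' {k : Fin l' | (i : ℕ) < (k : ℕ)}) :=
        Submodule.span_mono hsub hmem
      simpa using Submodule.neg_mem _ h1
    -- y - z lies in the span of the early roots
    have hyz1 : y - z ∈ Submodule.span ℝ (γ '' {k : Fin l' | (k : ℕ) ≤ (i : ℕ)}) := by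
      have hsy : s y = Scomp L1 z := by
        rw [hsS, ← hsplit, Scomp_append]
      have hyi : y - Scomp L1 z = γ i := by rw [← hsy]; exact hy'
      have hsub : {x : E | x ∈ L1} ⊆ γ '' {k : Fin l' | (k : ℕ) ≤ (i : ℕ)} := by
        intro x hx
        obtain ⟨k, hk, rfl⟩ := mem_take_ofFn γ ((i : ℕ) + 1) x hx
        exact ⟨k, by simpa using by omega, rfl⟩
      have h1 : Scomp L1 z - z ∈ Submodule.span ℝ (γ '' {k : Fin l' | (k : ℕ) ≤ (i : ℕ)}) :=
        Submodule.span_mono hsub (Scomp_sub_mem L1 z)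
      have hγi : γ i ∈ Submodule.span ℝ (γ '' {k : Fin l' | (k : ℕ) ≤ (i : ℕ)}) :=
        Submodule.subset_span ⟨i, show (i : ℕ) ≤ (i : ℕ) from le_refl _, rfl⟩
      have heq : y - z = γ i + (Scomp L1 z - z) := by rw [← hyi]; abel
      rw [heq]; exact Submodule.add_mem _ hγi h1
    have hdisj : Disjoint (Submodule.span ℝ (γ '' {k : Fin l' | (k : ℕ) ≤ (i : ℕ)}))
        (Submodule.span ℝ (γ '' {k : Fin l' | (i : ℕ) < (k : ℕ)})) := by
      apply hind.disjoint_span_image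
      rw [Set.disjoint_left]
      intro k hk1 hk2
      simp only [Set.mem_setOf_eq] at hk1 hk2
      omega
    have hyz : z = y := by
      have h0 : y - z = 0 := Submodule.disjoint_def.mp hdisj _ hyz1 hyz2
      have := sub_eq_zero.mp h0; exact this.symm
    have hfix : Scomp L2 y = y := by rw [← hz]; exact hyz
    -- the condition of fixed_orthogonal for the suffix list
    have Hcond : ∀ (p : List E) (a : E) (q : List E), L2 = p ++ a :: q →
        a ∉ Submodule.span ℝ {x : E | x ∈ q} := by
      intro p a q hpq
      have h1 : L2.drop p.length = a :: q := by rw [hpq, List.drop_left]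
      have h2 : L.drop ((i : ℕ) + 1 + p.length) = a :: q := by
        rw [← h1, hL2, List.drop_drop]
      set t : ℕ := (i : ℕ) + 1 + p.length with ht
      have htl : t < l' := by
        have := congrArg List.length h2
        simp only [List.length_drop, List.length_cons, hL, List.length_ofFn] at this
        omega
      have htL : t < L.length := by simp only [hL, List.length_ofFn]; exact htl
      have hhead : L.drop t = (L[t]'htL) :: L.drop (t + 1) :=
        List.drop_eq_getElem_cons htL
      rw [h2] at hhead
      have ha : a = γ ⟨t, htl⟩ := by
        have h3 := (List.cons.injEq _ _ _ _).mp hhead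
        rw [h3.1]
        simp only [hL, List.getElem_ofFn]
      have hq : q = L.drop (t + 1) := ((List.cons.injEq _ _ _ _).mp hhead).2
      intro hmem
      have hsub : {x : E | x ∈ q} ⊆ γ '' {k : Fin l' | t < (k : ℕ)} := by
        intro x hx
        rw [hq, hL] at hx
        obtain ⟨k, hk, rfl⟩ := mem_drop_ofFn γ (t + 1) x hx
        exact ⟨k, by simpa using by omega, rfl⟩
      have : γ ⟨t, htl⟩ ∈ Submodule.span ℝ (γ '' {k : Fin l' | t < (k : ℕ)}) := by
        rw [← ha]; exact Submodule.span_mono hsub hmem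
      exact hind.notMem_span_image (by simp) this
    have hjL2 : γ j ∈ L2 := by
      rw [hL2, hL, List.mem_iff_getElem]
      refine ⟨(j : ℕ) - ((i : ℕ) + 1),
        by simp only [List.length_drop, List.length_ofFn]; omega, ?_⟩
      simp only [List.getElem_drop, List.getElem_ofFn]
      congr 1
      apply Fin.ext
      simp only [Fin.val_mk]
      omega
    have horth : ⟪y, γ j⟫ = 0 := fixed_orthogonal L2 y Hcond hfix (γ j) hjL2
    rw [← hy']
    simp only [inner_sub_left, inner_add_left]
    linarith
  · -- diagonal part
    intro i y hy hy'
    have h1 : ⟪y + s y, γ i⟫ = 0 := by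
      rw [← hy']
      have h2 := real_inner_comm y (s y)
      have h3 := isom y y
      simp only [inner_add_left, inner_sub_right]
      linarith
    rw [h1, add_zero]
end

section
/- With A = ℂ_ε[SL₂*] as above (ε generic), M₋ = ℂ[e] the subalgebra generated by e, χ : M₋ → ℂ the character with χ(e) = 1, and Q = A ⊗_{M₋} ℂ_χ the induced module with cyclic vector v: the elements v_{mk} = t^m Ω^k v, for m ∈ ℤ and k ∈ ℕ, form a ℂ-linear basis of Q, and e acts on v_{mk} by e · v_{mk} = ε^{-m} v_{mk}. In particular the action of e - 1 on Q is diagonalizable (semisimple), not locally nilpotent. -/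
namespace SL2Star

/-- Generators of `ℂ_ε[SL₂*]`: `e`, `f`, `t`, `t⁻¹`. -/
inductive Gen | e | f | t | tinv

open Gen

/-- The defining relations of `ℂ_ε[SL₂*]`. -/
inductive Rel (ε : ℂ) : FreeAlgebra ℂ Gen → FreeAlgebra ℂ Gen → Prop
  | tt : Rel ε (FreeAlgebra.ι ℂ t * FreeAlgebra.ι ℂ tinv) 1
  | tt' : Rel ε (FreeAlgebra.ι ℂ tinv * FreeAlgebra.ι ℂ t) 1
  | te : Rel ε (FreeAlgebra.ι ℂ t * FreeAlgebra.ι ℂ e * FreeAlgebra.ι ℂ tinv)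
      (ε • FreeAlgebra.ι ℂ e)
  | tf : Rel ε (FreeAlgebra.ι ℂ t * FreeAlgebra.ι ℂ f * FreeAlgebra.ι ℂ tinv)
      (ε⁻¹ • FreeAlgebra.ι ℂ f)
  | ef : Rel ε (FreeAlgebra.ι ℂ e * FreeAlgebra.ι ℂ f - FreeAlgebra.ι ℂ f * FreeAlgebra.ι ℂ e)
      ((ε - ε⁻¹)⁻¹ • (FreeAlgebra.ι ℂ t * FreeAlgebra.ι ℂ t -
        FreeAlgebra.ι ℂ tinv * FreeAlgebra.ι ℂ tinv))

/-- The algebra `ℂ_ε[SL₂*]`. -/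
abbrev Alg (ε : ℂ) := RingQuot (Rel ε)

noncomputable def E (ε : ℂ) : Alg ε := RingQuot.mkAlgHom ℂ (Rel ε) (FreeAlgebra.ι ℂ e)
noncomputable def F (ε : ℂ) : Alg ε := RingQuot.mkAlgHom ℂ (Rel ε) (FreeAlgebra.ι ℂ f)
noncomputable def T (ε : ℂ) : Alg ε := RingQuot.mkAlgHom ℂ (Rel ε) (FreeAlgebra.ι ℂ t)
noncomputable def Tinv (ε : ℂ) : Alg ε := RingQuot.mkAlgHom ℂ (Rel ε) (FreeAlgebra.ι ℂ tinv)

/-- `t^m` for `m ∈ ℤ` (using `t⁻¹` for negative exponents). -/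
noncomputable def Tz (ε : ℂ) (m : ℤ) : Alg ε :=
  if 0 ≤ m then T ε ^ m.toNat else Tinv ε ^ (-m).toNat

/-- The quantum Casimir `Ω = (ε t² + ε⁻¹ t⁻²)/(ε - ε⁻¹)² + f e`. -/
noncomputable def Omega (ε : ℂ) : Alg ε :=
  ((ε - ε⁻¹) ^ 2)⁻¹ • (ε • (T ε * T ε) + ε⁻¹ • (Tinv ε * Tinv ε)) + F ε * E ε

/-- The left ideal of `ℂ_ε[SL₂*]` generated by `e - 1`, i.e. the kernel of the projection
onto `Q = A ⊗_{M₋} ℂ_χ` where `χ(e) = 1`. -/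
noncomputable def I (ε : ℂ) : Ideal (Alg ε) := Ideal.span {E ε - 1}

/-- The induced (Whittaker) module `Q = A ⊗_{ℂ[e]} ℂ_χ = A / A(e-1)`. -/
abbrev Q (ε : ℂ) := Alg ε ⧸ I ε

/-- The vectors `v_{mk} = tᵐ Ωᵏ v`, where `v` is the image of `1`. -/
noncomputable def vBasis (ε : ℂ) : ℤ × ℕ → Q ε :=
  fun p => Submodule.Quotient.mk (Tz ε p.1 * Omega ε ^ p.2)

end SL2Star

namespace SL2Star
open Gen

-- the Whittaker model space
noncomputable def w (p : ℤ × ℕ) : (ℤ × ℕ) →₀ ℂ := Finsupp.single p 1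

noncomputable def tE : Module.End ℂ ((ℤ × ℕ) →₀ ℂ) :=
  Finsupp.lmapDomain ℂ ℂ (fun p => (p.1 + 1, p.2))
noncomputable def tinvE : Module.End ℂ ((ℤ × ℕ) →₀ ℂ) :=
  Finsupp.lmapDomain ℂ ℂ (fun p => (p.1 - 1, p.2))
noncomputable def eE (ε : ℂ) : Module.End ℂ ((ℤ × ℕ) →₀ ℂ) :=
  Finsupp.lsum ℂ fun p => LinearMap.toSpanSingleton ℂ _ (ε ^ (-p.1) • w p)
noncomputable def fE (ε : ℂ) : Module.End ℂ ((ℤ × ℕ) →₀ ℂ) :=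
  Finsupp.lsum ℂ fun p => LinearMap.toSpanSingleton ℂ _
    (ε ^ p.1 • (w (p.1, p.2 + 1) - (((ε - ε⁻¹) ^ 2)⁻¹ * ε) • w (p.1 + 2, p.2)
      - (((ε - ε⁻¹) ^ 2)⁻¹ * ε⁻¹) • w (p.1 - 2, p.2)))

@[simp] theorem tE_w (p : ℤ × ℕ) : tE (w p) = w (p.1 + 1, p.2) := by
  simp [tE, w, Finsupp.lmapDomain_apply, Finsupp.mapDomain_single]

@[simp] theorem tinvE_w (p : ℤ × ℕ) : tinvE (w p) = w (p.1 - 1, p.2) := by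
  simp [tinvE, w, Finsupp.lmapDomain_apply, Finsupp.mapDomain_single]

@[simp] theorem eE_w (ε : ℂ) (p : ℤ × ℕ) : eE ε (w p) = ε ^ (-p.1) • w p := by
  simp [eE, w, Finsupp.lsum_single, LinearMap.toSpanSingleton_apply]

@[simp] theorem fE_w (ε : ℂ) (p : ℤ × ℕ) :
    fE ε (w p) = ε ^ p.1 • (w (p.1, p.2 + 1) - (((ε - ε⁻¹) ^ 2)⁻¹ * ε) • w (p.1 + 2, p.2)
      - (((ε - ε⁻¹) ^ 2)⁻¹ * ε⁻¹) • w (p.1 - 2, p.2)) := by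
  simp [fE, w, Finsupp.lsum_single, LinearMap.toSpanSingleton_apply]

theorem endExt {L1 L2 : Module.End ℂ ((ℤ × ℕ) →₀ ℂ)} (h : ∀ p, L1 (w p) = L2 (w p)) :
    L1 = L2 := by
  refine Finsupp.lhom_ext fun a b => ?_
  have : (Finsupp.single a b : (ℤ × ℕ) →₀ ℂ) = b • w a := by
    simp [w, Finsupp.smul_single]
  rw [this, map_smul, map_smul, h]

noncomputable def genAct (ε : ℂ) : Gen → Module.End ℂ ((ℤ × ℕ) →₀ ℂ)
  | e => eE ε
  | f => fE ε
  | t => tE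
  | tinv => tinvE


theorem rel_act (ε : ℂ) (hε : ε ≠ 0) (hd : ε - ε⁻¹ ≠ 0) :
    ∀ {x y}, Rel ε x y →
      FreeAlgebra.lift ℂ (genAct ε) x = FreeAlgebra.lift ℂ (genAct ε) y := by
  intro x y r
  have hz : ∀ (a b : ℤ), ε ^ (a + b) = ε ^ a * ε ^ b := fun a b => zpow_add₀ hε a b
  induction r with
  | tt =>
      refine endExt fun p => ?_
      simp [genAct, Module.End.mul_apply]
  | tt' =>
      refine endExt fun p => ?_
      simp [genAct, Module.End.mul_apply]
  | te =>
      refine endExt fun p => ?_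
      obtain ⟨m, k⟩ := p
      simp [genAct, Module.End.mul_apply, smul_smul]
      match_scalars
      rw [show (1 - m : ℤ) = 1 + -m by ring, zpow_add₀ hε]
      simp
  | tf =>
      refine endExt fun p => ?_
      obtain ⟨m, k⟩ := p
      simp only [map_mul, FreeAlgebra.lift_ι_apply, genAct, Module.End.mul_apply, tE_w, tinvE_w,
        fE_w, eE_w, map_smul, map_sub, LinearMap.smul_apply,
        show (m - 1 : ℤ) = -1 + m by ring, hz, zpow_neg, zpow_one]
      ring_nf
      match_scalars <;> ring
  | ef =>
      refine endExt fun p => ?_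
      obtain ⟨m, k⟩ := p
      have hm : ε ^ m ≠ 0 := zpow_ne_zero _ hε
      have h21 : ε * ε - 1 ≠ 0 := by
        intro h
        apply hd
        field_simp
        linear_combination h
      simp only [map_mul, map_sub, map_smul, FreeAlgebra.lift_ι_apply, genAct,
        Module.End.mul_apply, LinearMap.sub_apply, LinearMap.smul_apply, tE_w, tinvE_w,
        fE_w, eE_w, smul_sub, smul_smul,
        show (-(m + 2) : ℤ) = -m + -2 by ring, show (-(m - 2) : ℤ) = -m + 2 by ring, hz,
        zpow_neg, show (m + 1 + 1 : ℤ) = m + 2 by ring, show (m - 1 - 1 : ℤ) = m - 2 by ring,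
        show ε - ε⁻¹ = (ε * ε - 1) * ε⁻¹ by field_simp,
        show ε ^ (2:ℤ) = ε * ε by rw [show (2:ℤ) = ((2:ℕ):ℤ) by norm_num, zpow_natCast]; ring]
      generalize hxg : ε ^ m = x
      rw [hxg] at hm
      have hone : (1 : ℂ) - ε * ε ≠ 0 := by intro h; apply h21; linear_combination -h
      have hD : x * ε ^ 2 - x * ε ^ 4 * 4 + (x * ε ^ 6 * 6 - x * ε ^ 8 * 4) + x * ε ^ 10 ≠ 0 := by
        rw [show x * ε ^ 2 - x * ε ^ 4 * 4 + (x * ε ^ 6 * 6 - x * ε ^ 8 * 4) + x * ε ^ 10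
            = x * ε ^ 2 * (1 - ε * ε) ^ 4 by ring]
        exact mul_ne_zero (mul_ne_zero hm (pow_ne_zero _ hε)) (pow_ne_zero _ hone)
      have h2 : ε ^ 2 - 1 ≠ 0 := by rw [sq]; exact h21
      match_scalars <;> field_simp <;> ring
end SL2Star




namespace SL2Star
open Gen

variable {ε : ℂ} (hε : ε ≠ 0) (hd : ε - ε⁻¹ ≠ 0)

noncomputable def rho (ε : ℂ) (hε : ε ≠ 0) (hd : ε - ε⁻¹ ≠ 0) :
    Alg ε →ₐ[ℂ] Module.End ℂ ((ℤ × ℕ) →₀ ℂ) :=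
  RingQuot.liftAlgHom ℂ ⟨FreeAlgebra.lift ℂ (genAct ε), fun _ _ h => rel_act ε hε hd h⟩

@[simp] theorem rho_E : rho ε hε hd (E ε) = eE ε := by
  rw [E, rho, RingQuot.liftAlgHom_mkAlgHom_apply]
  simp [FreeAlgebra.lift_ι_apply, genAct]

@[simp] theorem rho_F : rho ε hε hd (F ε) = fE ε := by
  rw [F, rho, RingQuot.liftAlgHom_mkAlgHom_apply]
  simp [FreeAlgebra.lift_ι_apply, genAct]

@[simp] theorem rho_T : rho ε hε hd (T ε) = tE := by
  rw [T, rho, RingQuot.liftAlgHom_mkAlgHom_apply]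
  simp [FreeAlgebra.lift_ι_apply, genAct]

@[simp] theorem rho_Tinv : rho ε hε hd (Tinv ε) = tinvE := by
  rw [Tinv, rho, RingQuot.liftAlgHom_mkAlgHom_apply]
  simp [FreeAlgebra.lift_ι_apply, genAct]

end SL2Star

namespace SL2Star
open Gen
variable {ε : ℂ} (hε : ε ≠ 0) (hd : ε - ε⁻¹ ≠ 0)

/-- evaluation at the cyclic vector -/
noncomputable def psi (ε : ℂ) (hε : ε ≠ 0) (hd : ε - ε⁻¹ ≠ 0) :
    Alg ε →ₗ[ℂ] ((ℤ × ℕ) →₀ ℂ) where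
  toFun a := rho ε hε hd a (w (0, 0))
  map_add' a b := by simp [map_add]
  map_smul' c a := by simp [map_smul]

theorem psi_mul (a b : Alg ε) : psi ε hε hd (a * b) = rho ε hε hd a (psi ε hε hd b) := by
  simp [psi, map_mul, Module.End.mul_apply]

theorem ker_psi : (I ε).restrictScalars ℂ ≤ LinearMap.ker (psi ε hε hd) := by
  intro x hx
  obtain ⟨a, ha⟩ := Submodule.mem_span_singleton.mp hx
  rw [LinearMap.mem_ker, ← ha, smul_eq_mul, psi_mul]
  have : psi ε hε hd (E ε - 1) = 0 := by
    simp [psi, map_sub, map_one, LinearMap.sub_apply, Module.End.one_apply]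
  rw [this, map_zero]

noncomputable def phi (ε : ℂ) (hε : ε ≠ 0) (hd : ε - ε⁻¹ ≠ 0) :
    Q ε →ₗ[ℂ] ((ℤ × ℕ) →₀ ℂ) :=
  (Submodule.liftQ ((I ε).restrictScalars ℂ) (psi ε hε hd) (ker_psi hε hd)).comp
    (Submodule.Quotient.restrictScalarsEquiv ℂ (I ε)).symm.toLinearMap

@[simp] theorem phi_mk (a : Alg ε) :
    phi ε hε hd (Submodule.Quotient.mk a) = psi ε hε hd a := by
  simp [phi]

end SL2Star

namespace SL2Star
open Gen
variable {ε : ℂ} (hε : ε ≠ 0) (hd : ε - ε⁻¹ ≠ 0)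

theorem rho_Omega_w (p : ℤ × ℕ) :
    rho ε hε hd (Omega ε) (w p) = w (p.1, p.2 + 1) := by
  obtain ⟨m, k⟩ := p
  have hm : ε ^ m ≠ 0 := zpow_ne_zero _ hε
  simp only [Omega, map_add, map_smul, map_mul, rho_T, rho_Tinv, rho_F, rho_E,
    LinearMap.add_apply, LinearMap.smul_apply, Module.End.mul_apply, tE_w, tinvE_w, eE_w, fE_w,
    map_sub, map_smul, smul_sub, smul_smul,
    show (m + 1 + 1 : ℤ) = m + 2 by ring, show (m - 1 - 1 : ℤ) = m - 2 by ring, zpow_neg]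
  match_scalars <;> field_simp <;> ring

theorem tE_pow_w (n : ℕ) (p : ℤ × ℕ) : (tE ^ n) (w p) = w (p.1 + n, p.2) := by
  induction n generalizing p with
  | zero => simp
  | succ n ih =>
      rw [pow_succ', Module.End.mul_apply, ih, tE_w]
      congr 2
      push_cast
      ring

theorem tinvE_pow_w (n : ℕ) (p : ℤ × ℕ) : (tinvE ^ n) (w p) = w (p.1 - n, p.2) := by
  induction n generalizing p with
  | zero => simp
  | succ n ih =>
      rw [pow_succ', Module.End.mul_apply, ih, tinvE_w]
      congr 2
      push_cast
      ring

theorem rho_Tz_w (m : ℤ) (k : ℕ) :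
    rho ε hε hd (Tz ε m) (w (0, k)) = w (m, k) := by
  rw [Tz]
  split_ifs with h
  · rw [map_pow, rho_T, tE_pow_w]
    congr 2
    simpa using Int.toNat_of_nonneg h
  · rw [map_pow, rho_Tinv, tinvE_pow_w]
    congr 2
    push_neg at h
    simp [Int.toNat_of_nonneg (by omega : (0:ℤ) ≤ -m)]

theorem psi_basis (m : ℤ) (k : ℕ) :
    psi ε hε hd (Tz ε m * Omega ε ^ k) = w (m, k) := by
  have hk : ∀ k, rho ε hε hd (Omega ε ^ k) (w (0, 0)) = w (0, k) := by
    intro k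
    induction k with
    | zero => simp
    | succ k ih =>
        rw [pow_succ', map_mul, Module.End.mul_apply, ih, rho_Omega_w]
  rw [psi_mul]
  have : psi ε hε hd (Omega ε ^ k) = w (0, k) := hk k
  rw [this, rho_Tz_w]

theorem phi_vBasis (p : ℤ × ℕ) : phi ε hε hd (vBasis ε p) = w p := by
  rw [vBasis, phi_mk, psi_basis]

end SL2Star

namespace SL2Star
open Gen
variable {ε : ℂ} (hε : ε ≠ 0) (hd : ε - ε⁻¹ ≠ 0)

theorem T_Tinv : T ε * Tinv ε = 1 := by
  have h := RingQuot.mkAlgHom_rel ℂ (Rel.tt (ε := ε))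
  rw [map_mul, map_one] at h
  exact h

theorem Tinv_T : Tinv ε * T ε = 1 := by
  have h := RingQuot.mkAlgHom_rel ℂ (Rel.tt' (ε := ε))
  rw [map_mul, map_one] at h
  exact h

theorem foldE : RingQuot.mkAlgHom ℂ (Rel ε) (FreeAlgebra.ι ℂ e) = E ε := rfl
theorem foldF : RingQuot.mkAlgHom ℂ (Rel ε) (FreeAlgebra.ι ℂ f) = F ε := rfl
theorem foldT : RingQuot.mkAlgHom ℂ (Rel ε) (FreeAlgebra.ι ℂ t) = T ε := rfl
theorem foldTinv : RingQuot.mkAlgHom ℂ (Rel ε) (FreeAlgebra.ι ℂ tinv) = Tinv ε := rfl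

theorem TE (ε : ℂ) : T ε * E ε = ε • (E ε * T ε) := by
  have h := RingQuot.mkAlgHom_rel ℂ (Rel.te (ε := ε))
  rw [map_mul, map_mul, map_smul, foldE, foldT, foldTinv] at h
  have h2 := congrArg (· * T ε) h
  simp only [smul_mul_assoc, mul_assoc, Tinv_T, mul_one] at h2
  exact h2

theorem TF (ε : ℂ) : T ε * F ε = ε⁻¹ • (F ε * T ε) := by
  have h := RingQuot.mkAlgHom_rel ℂ (Rel.tf (ε := ε))
  rw [map_mul, map_mul, map_smul, foldF, foldT, foldTinv] at h
  have h2 := congrArg (· * T ε) h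
  simp only [smul_mul_assoc, mul_assoc, Tinv_T, mul_one] at h2
  exact h2

theorem ET (hε : ε ≠ 0) : E ε * T ε = ε⁻¹ • (T ε * E ε) := by
  rw [TE, smul_smul, inv_mul_cancel₀ hε, one_smul]

theorem FT (hε : ε ≠ 0) : F ε * T ε = ε • (T ε * F ε) := by
  rw [TF, smul_smul, mul_inv_cancel₀ hε, one_smul]

theorem ETinv : E ε * Tinv ε = ε • (Tinv ε * E ε) := by
  have h2 := congrArg (fun x => Tinv ε * x * Tinv ε) (TE ε)
  simp only [mul_smul_comm, smul_mul_assoc, mul_assoc, T_Tinv, mul_one] at h2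
  rw [← mul_assoc, Tinv_T, one_mul] at h2
  exact h2

theorem FTinv : F ε * Tinv ε = ε⁻¹ • (Tinv ε * F ε) := by
  have h2 := congrArg (fun x => Tinv ε * x * Tinv ε) (TF ε)
  simp only [mul_smul_comm, smul_mul_assoc, mul_assoc, T_Tinv, mul_one] at h2
  rw [← mul_assoc, Tinv_T, one_mul] at h2
  exact h2

theorem EF_FE (ε : ℂ) :
    E ε * F ε - F ε * E ε = (ε - ε⁻¹)⁻¹ • (T ε * T ε - Tinv ε * Tinv ε) := by
  have h := RingQuot.mkAlgHom_rel ℂ (Rel.ef (ε := ε))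
  rw [map_sub, map_smul, map_sub, map_mul, map_mul, map_mul, map_mul] at h
  exact h

end SL2Star

namespace SL2Star
open Gen
variable {ε : ℂ}

theorem hEF (ε : ℂ) : E ε * F ε
    = F ε * E ε + (ε - ε⁻¹)⁻¹ • (T ε * T ε - Tinv ε * Tinv ε) := by
  have h := EF_FE ε
  linear_combination (norm := module) h

theorem hET2 (hε : ε ≠ 0) : E ε * (T ε * T ε) = (ε⁻¹ * ε⁻¹) • (T ε * (T ε * E ε)) := by
  rw [← mul_assoc, ET hε, smul_mul_assoc, mul_assoc, ET hε, mul_smul_comm, smul_smul]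

theorem hETinv2 (hε : ε ≠ 0) :
    E ε * (Tinv ε * Tinv ε) = (ε * ε) • (Tinv ε * (Tinv ε * E ε)) := by
  rw [← mul_assoc, ETinv, smul_mul_assoc, mul_assoc, ETinv, mul_smul_comm, smul_smul]

theorem hFT2 (hε : ε ≠ 0) : F ε * (T ε * T ε) = (ε * ε) • (T ε * (T ε * F ε)) := by
  rw [← mul_assoc, FT hε, smul_mul_assoc, mul_assoc, FT hε, mul_smul_comm, smul_smul]

theorem hFTinv2 (hε : ε ≠ 0) :
    F ε * (Tinv ε * Tinv ε) = (ε⁻¹ * ε⁻¹) • (Tinv ε * (Tinv ε * F ε)) := by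
  rw [← mul_assoc, FTinv, smul_mul_assoc, mul_assoc, FTinv, mul_smul_comm, smul_smul]

theorem Omega_comm_T (hε : ε ≠ 0) : Commute (Omega ε) (T ε) := by
  show Omega ε * T ε = T ε * Omega ε
  have hB : T ε * (F ε * E ε) = F ε * (E ε * T ε) := by
    rw [← mul_assoc, TF, smul_mul_assoc, mul_assoc, TE, mul_smul_comm, smul_smul,
      inv_mul_cancel₀ hε, one_smul]
  have hA : T ε * (Tinv ε * Tinv ε) = Tinv ε * (Tinv ε * T ε) := by
    rw [← mul_assoc, T_Tinv, one_mul, Tinv_T, mul_one]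
  have hC : E ε * T ε = ε⁻¹ • (T ε * E ε) := ET hε
  simp only [Omega, mul_add, add_mul, smul_add, smul_mul_assoc, mul_smul_comm, mul_assoc,
    hA, hB, hC, smul_smul]
  try match_scalars <;> field_simp

theorem Omega_comm_Tinv (hε : ε ≠ 0) : Commute (Omega ε) (Tinv ε) := by
  show Omega ε * Tinv ε = Tinv ε * Omega ε
  have hB : Tinv ε * (F ε * E ε) = F ε * (E ε * Tinv ε) := by
    have h1 : Tinv ε * F ε = ε • (F ε * Tinv ε) := by
      rw [FTinv, smul_smul, mul_inv_cancel₀ hε, one_smul]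
    have h2 : Tinv ε * E ε = ε⁻¹ • (E ε * Tinv ε) := by
      rw [ETinv, smul_smul, inv_mul_cancel₀ hε, one_smul]
    rw [← mul_assoc, h1, smul_mul_assoc, mul_assoc, h2, mul_smul_comm, smul_smul,
      mul_inv_cancel₀ hε, one_smul]
  have hA : Tinv ε * (T ε * T ε) = T ε * (T ε * Tinv ε) := by
    rw [← mul_assoc, Tinv_T, one_mul, T_Tinv, mul_one]
  have hC : E ε * Tinv ε = ε • (Tinv ε * E ε) := ETinv
  simp only [Omega, mul_add, add_mul, smul_add, smul_mul_assoc, mul_smul_comm, mul_assoc,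
    hA, hB, hC, smul_smul]
  try match_scalars <;> field_simp

theorem hEFE (ε : ℂ) : E ε * (F ε * E ε) = F ε * (E ε * E ε)
    + (ε - ε⁻¹)⁻¹ • (T ε * (T ε * E ε)) - (ε - ε⁻¹)⁻¹ • (Tinv ε * (Tinv ε * E ε)) := by
  rw [← mul_assoc, hEF, add_mul, smul_mul_assoc, sub_mul, mul_assoc, mul_assoc, mul_assoc,
    smul_sub, add_sub_assoc]

theorem Omega_comm_E (hε : ε ≠ 0) (hd : ε - ε⁻¹ ≠ 0) : Commute (Omega ε) (E ε) := by
  show Omega ε * E ε = E ε * Omega ε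
  have h21 : ε * ε - 1 ≠ 0 := by
    intro h; apply hd; field_simp; linear_combination h
  simp only [Omega, mul_add, add_mul, smul_add, smul_sub, mul_sub, smul_mul_assoc,
    mul_smul_comm, mul_assoc, hEFE, hET2 hε, hETinv2 hε, smul_smul,
    show ε - ε⁻¹ = (ε * ε - 1) * ε⁻¹ by field_simp]
  match_scalars <;> field_simp <;> ring

theorem Omega_comm_F (hε : ε ≠ 0) (hd : ε - ε⁻¹ ≠ 0) : Commute (Omega ε) (F ε) := by
  show Omega ε * F ε = F ε * Omega ε
  have h21 : ε * ε - 1 ≠ 0 := by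
    intro h; apply hd; field_simp; linear_combination h
  simp only [Omega, mul_add, add_mul, smul_add, smul_sub, mul_sub, smul_mul_assoc,
    mul_smul_comm, mul_assoc, hEF, hFT2 hε, hFTinv2 hε, smul_smul,
    show ε - ε⁻¹ = (ε * ε - 1) * ε⁻¹ by field_simp]
  match_scalars <;> field_simp <;> ring

end SL2Star

namespace SL2Star
open Gen
variable {ε : ℂ}

theorem comm_T_Tinv : Commute (T ε) (Tinv ε) := by
  unfold Commute SemiconjBy
  rw [T_Tinv, Tinv_T]

theorem comm_T_Tz (m : ℤ) : Commute (T ε) (Tz ε m) := by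
  rw [Tz]
  split_ifs
  · exact (Commute.refl _).pow_right _
  · exact comm_T_Tinv.pow_right _

theorem comm_Tinv_Tz (m : ℤ) : Commute (Tinv ε) (Tz ε m) := by
  rw [Tz]
  split_ifs
  · exact comm_T_Tinv.symm.pow_right _
  · exact (Commute.refl _).pow_right _

theorem T_mul_Tz (m : ℤ) : T ε * Tz ε m = Tz ε (m + 1) := by
  rcases le_or_gt 0 m with h | h
  · rw [Tz, if_pos h, Tz, if_pos (by omega), ← pow_succ']
    congr 1
    omega
  · have hk : (-m).toNat = (-(m + 1)).toNat + 1 := by omega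
    rw [Tz, if_neg (by omega), hk, pow_succ', ← mul_assoc, T_Tinv, one_mul, Tz]
    split_ifs with h2
    · have h3 : (-(m + 1)).toNat = 0 := by omega
      have h4 : (m + 1).toNat = 0 := by omega
      rw [h3, h4, pow_zero, pow_zero]
    · rfl

theorem Tinv_mul_Tz (m : ℤ) : Tinv ε * Tz ε m = Tz ε (m - 1) := by
  have h := T_mul_Tz (ε := ε) (m - 1)
  rw [show m - 1 + 1 = m from by omega] at h
  rw [← h, ← mul_assoc, Tinv_T, one_mul]

theorem Tz_mul_T (m : ℤ) : Tz ε m * T ε = Tz ε (m + 1) := by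
  rw [← (comm_T_Tz m).eq, T_mul_Tz]

theorem E_pow_T (hε : ε ≠ 0) (n : ℕ) :
    E ε * T ε ^ n = (ε⁻¹) ^ n • (T ε ^ n * E ε) := by
  induction n with
  | zero => simp
  | succ n ih =>
      rw [pow_succ, ← mul_assoc, ih, smul_mul_assoc, mul_assoc, ET hε, mul_smul_comm,
        smul_smul, ← pow_succ, mul_assoc]

theorem E_pow_Tinv (n : ℕ) :
    E ε * Tinv ε ^ n = ε ^ n • (Tinv ε ^ n * E ε) := by
  induction n with
  | zero => simp
  | succ n ih =>
      rw [pow_succ, ← mul_assoc, ih, smul_mul_assoc, mul_assoc, ETinv, mul_smul_comm,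
        smul_smul, ← pow_succ, mul_assoc]

theorem F_pow_T (hε : ε ≠ 0) (n : ℕ) :
    F ε * T ε ^ n = ε ^ n • (T ε ^ n * F ε) := by
  induction n with
  | zero => simp
  | succ n ih =>
      rw [pow_succ, ← mul_assoc, ih, smul_mul_assoc, mul_assoc, FT hε, mul_smul_comm,
        smul_smul, ← pow_succ, mul_assoc]

theorem F_pow_Tinv (n : ℕ) :
    F ε * Tinv ε ^ n = (ε⁻¹) ^ n • (Tinv ε ^ n * F ε) := by
  induction n with
  | zero => simp
  | succ n ih =>
      rw [pow_succ, ← mul_assoc, ih, smul_mul_assoc, mul_assoc, FTinv, mul_smul_comm,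
        smul_smul, ← pow_succ, mul_assoc]

theorem E_Tz (hε : ε ≠ 0) (m : ℤ) :
    E ε * Tz ε m = (ε ^ (-m) : ℂ) • (Tz ε m * E ε) := by
  rw [Tz]
  split_ifs with h
  · rw [E_pow_T hε]
    congr 1
    rw [inv_pow, ← zpow_natCast ε, ← zpow_neg]
    congr 1
    omega
  · rw [E_pow_Tinv]
    congr 1
    rw [← zpow_natCast ε]
    congr 1
    omega

theorem F_Tz (hε : ε ≠ 0) (m : ℤ) :
    F ε * Tz ε m = (ε ^ m : ℂ) • (Tz ε m * F ε) := by
  rw [Tz]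
  split_ifs with h
  · rw [F_pow_T hε]
    congr 1
    rw [← zpow_natCast ε]
    congr 1
    omega
  · rw [F_pow_Tinv]
    congr 1
    rw [inv_pow, ← zpow_natCast ε, ← zpow_neg]
    congr 1
    omega

end SL2Star

namespace SL2Star
open Gen
variable {ε : ℂ}

theorem mk_mul_E (a : Alg ε) :
    (Submodule.Quotient.mk (a * E ε) : Q ε) = Submodule.Quotient.mk a := by
  rw [Submodule.Quotient.eq]
  have h : a * E ε - a = a * (E ε - 1) := by rw [mul_sub, mul_one]
  rw [h]
  exact Ideal.mul_mem_left _ a (by rw [I]; exact Ideal.subset_span rfl)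

theorem smul_mk (a x : Alg ε) :
    a • (Submodule.Quotient.mk x : Q ε) = Submodule.Quotient.mk (a * x) := by
  rw [← smul_eq_mul, Submodule.Quotient.mk_smul]

theorem csmul_mk (c : ℂ) (x : Alg ε) :
    c • (Submodule.Quotient.mk x : Q ε) = Submodule.Quotient.mk (c • x) := by
  rw [Submodule.Quotient.mk_smul]

theorem smul_csmul (a : Alg ε) (c : ℂ) (q : Q ε) :
    a • (c • q) = c • (a • q) := by
  obtain ⟨y, rfl⟩ := Submodule.Quotient.mk_surjective _ q
  rw [csmul_mk, smul_mk, smul_mk, csmul_mk, mul_smul_comm]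

theorem E_smul_vBasis (hε : ε ≠ 0) (hd : ε - ε⁻¹ ≠ 0) (m : ℤ) (k : ℕ) :
    E ε • vBasis ε (m, k) = (ε ^ (-m) : ℂ) • vBasis ε (m, k) := by
  have key : E ε * (Tz ε m * Omega ε ^ k)
      = (ε ^ (-m) : ℂ) • (Tz ε m * Omega ε ^ k * E ε) := by
    rw [← mul_assoc, E_Tz hε, smul_mul_assoc, mul_assoc, mul_assoc,
      ((Omega_comm_E hε hd).pow_left k).symm.eq]
  show E ε • (Submodule.Quotient.mk (Tz ε m * Omega ε ^ k) : Q ε) = _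
  rw [smul_mk, key, ← csmul_mk, mk_mul_E]
  rfl

theorem hFE (ε : ℂ) : F ε * E ε = Omega ε
    - ((ε - ε⁻¹) ^ 2)⁻¹ • (ε • (T ε * T ε) + ε⁻¹ • (Tinv ε * Tinv ε)) :=
  eq_sub_of_add_eq' rfl

theorem Tz_mul_Tinv (m : ℤ) : Tz ε m * Tinv ε = Tz ε (m - 1) := by
  rw [← (comm_Tinv_Tz m).eq, Tinv_mul_Tz]

theorem F_mk_vBasis (hε : ε ≠ 0) (hd : ε - ε⁻¹ ≠ 0) (m : ℤ) (k : ℕ) :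
    F ε • vBasis ε (m, k)
      = (ε ^ m : ℂ) • (vBasis ε (m, k + 1)
        - (((ε - ε⁻¹) ^ 2)⁻¹ * ε) • vBasis ε (m + 2, k)
        - (((ε - ε⁻¹) ^ 2)⁻¹ * ε⁻¹) • vBasis ε (m - 2, k)) := by
  have key : F ε * (Tz ε m * Omega ε ^ k)
      = (ε ^ m : ℂ) • (Tz ε m * Omega ε ^ k * F ε) := by
    rw [← mul_assoc, F_Tz hε, smul_mul_assoc, mul_assoc, mul_assoc,
      ((Omega_comm_F hε hd).pow_left k).symm.eq]
  have s4 : Tz ε m * Omega ε ^ k * Omega ε = Tz ε m * Omega ε ^ (k + 1) := by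
    rw [mul_assoc, ← pow_succ]
  have s5 : Tz ε m * Omega ε ^ k * (T ε * T ε) = Tz ε (m + 2) * Omega ε ^ k := by
    rw [mul_assoc,
      (((Omega_comm_T hε).pow_left k).mul_right ((Omega_comm_T hε).pow_left k)).eq,
      ← mul_assoc, ← mul_assoc, Tz_mul_T, Tz_mul_T, show m + 1 + 1 = m + 2 from by omega]
  have s6 : Tz ε m * Omega ε ^ k * (Tinv ε * Tinv ε) = Tz ε (m - 2) * Omega ε ^ k := by
    rw [mul_assoc,
      (((Omega_comm_Tinv hε).pow_left k).mul_right ((Omega_comm_Tinv hε).pow_left k)).eq,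
      ← mul_assoc, ← mul_assoc, Tz_mul_Tinv, Tz_mul_Tinv,
      show m - 1 - 1 = m - 2 from by omega]
  have big : Tz ε m * Omega ε ^ k * F ε * E ε
      = Tz ε m * Omega ε ^ (k + 1)
        - (((ε - ε⁻¹) ^ 2)⁻¹ * ε) • (Tz ε (m + 2) * Omega ε ^ k)
        - (((ε - ε⁻¹) ^ 2)⁻¹ * ε⁻¹) • (Tz ε (m - 2) * Omega ε ^ k) := by
    rw [mul_assoc _ (F ε), hFE, mul_sub, s4, mul_smul_comm, mul_add, mul_smul_comm,
      mul_smul_comm, s5, s6]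
    match_scalars <;> ring
  show F ε • (Submodule.Quotient.mk (Tz ε m * Omega ε ^ k) : Q ε) = _
  rw [smul_mk, key, ← csmul_mk,
    show (Submodule.Quotient.mk (Tz ε m * Omega ε ^ k * F ε) : Q ε)
      = Submodule.Quotient.mk (Tz ε m * Omega ε ^ k * F ε * E ε) from (mk_mul_E _).symm,
    big]
  rw [Submodule.Quotient.mk_sub, Submodule.Quotient.mk_sub, ← csmul_mk, ← csmul_mk]
  rfl

end SL2Star

open SL2Star in
/-- for generic `ε`, the vectors `v_{mk} = tᵐ Ωᵏ v` (`m ∈ ℤ`, `k ∈ ℕ`) form a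
`ℂ`-basis of `Q = ℂ_ε[SL₂*] ⊗_{ℂ[e]} ℂ_χ`, and `e` acts on `v_{mk}` by the scalar `ε^{-m}`.
In particular `e - 1` acts diagonalizably and not locally nilpotently on `Q`. -/
theorem whittaker_module_basis_and_semisimplicity
    (ε : ℂ) (hε : ε ≠ 0) (hroot : ∀ n : ℕ, 0 < n → ε ^ n ≠ 1) :
    LinearIndependent ℂ (vBasis ε) ∧
      Submodule.span ℂ (Set.range (vBasis ε)) = ⊤ ∧
      (∀ (m : ℤ) (k : ℕ), E ε • vBasis ε (m, k) = (ε ^ (-m) : ℂ) • vBasis ε (m, k)) ∧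
      ∃ q : Q ε, ∀ n : ℕ, (fun x : Q ε => E ε • x - x)^[n] q ≠ 0 := by
  have hd : ε - ε⁻¹ ≠ 0 := by
    intro h
    rw [sub_eq_zero] at h
    apply hroot 2 (by norm_num)
    rw [sq]
    nth_rewrite 2 [h]
    exact mul_inv_cancel₀ hε
  -- linear independence
  have hli : LinearIndependent ℂ (vBasis ε) := by
    have h1 := (Finsupp.basisSingleOne (R := ℂ) (ι := ℤ × ℕ)).linearIndependent
    rw [Finsupp.coe_basisSingleOne] at h1
    apply LinearIndependent.of_comp (phi ε hε hd)
    have hcomp : ⇑(phi ε hε hd) ∘ vBasis ε = fun p => Finsupp.single p 1 :=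
      funext fun p => by simpa [w] using phi_vBasis hε hd p
    rw [hcomp]
    exact h1
  -- spanning
  have hspan : Submodule.span ℂ (Set.range (vBasis ε)) = ⊤ := by
    set S := Submodule.span ℂ (Set.range (vBasis ε)) with hS
    have hmem : ∀ p, vBasis ε p ∈ S := fun p => Submodule.subset_span ⟨p, rfl⟩
    have hgen : ∀ (G : Alg ε), (∀ p, G • vBasis ε p ∈ S) → ∀ q ∈ S, G • q ∈ S := by
      intro G hG q hq
      refine Submodule.span_induction ?_ ?_ ?_ ?_ hq
      · rintro v ⟨p, rfl⟩
        exact hG p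
      · rw [smul_zero]; exact zero_mem S
      · intro u v _ _ hu hv
        rw [smul_add]; exact add_mem hu hv
      · intro c v _ hv
        rw [smul_csmul]; exact Submodule.smul_mem S c hv
    have hT : ∀ p, T ε • vBasis ε p ∈ S := by
      intro p
      have : T ε • vBasis ε p = vBasis ε (p.1 + 1, p.2) := by
        show T ε • (Submodule.Quotient.mk _ : Q ε) = _
        rw [smul_mk, ← mul_assoc, T_mul_Tz]
        rfl
      rw [this]; exact hmem _
    have hTinv : ∀ p, Tinv ε • vBasis ε p ∈ S := by
      intro p
      have : Tinv ε • vBasis ε p = vBasis ε (p.1 - 1, p.2) := by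
        show Tinv ε • (Submodule.Quotient.mk _ : Q ε) = _
        rw [smul_mk, ← mul_assoc, Tinv_mul_Tz]
        rfl
      rw [this]; exact hmem _
    have hE : ∀ p, E ε • vBasis ε p ∈ S := by
      intro p
      rw [show p = (p.1, p.2) from rfl, E_smul_vBasis hε hd]
      exact Submodule.smul_mem S _ (hmem _)
    have hF : ∀ p, F ε • vBasis ε p ∈ S := by
      intro p
      rw [show p = (p.1, p.2) from rfl, F_mk_vBasis hε hd]
      exact Submodule.smul_mem S _ (sub_mem (sub_mem (hmem _)
        (Submodule.smul_mem S _ (hmem _))) (Submodule.smul_mem S _ (hmem _)))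
    have hact : ∀ (x : FreeAlgebra ℂ Gen) (q : Q ε), q ∈ S →
        (RingQuot.mkAlgHom ℂ (Rel ε) x) • q ∈ S := by
      intro x
      induction x using FreeAlgebra.induction with
      | grade0 c =>
          intro q hq
          rw [AlgHom.commutes, algebraMap_smul]
          exact Submodule.smul_mem S c hq
      | grade1 g =>
          cases g with
          | e => exact hgen _ hE
          | f => exact hgen _ hF
          | t => exact hgen _ hT
          | tinv => exact hgen _ hTinv
      | mul a b iha ihb =>
          intro q hq
          rw [map_mul, mul_smul]
          exact iha _ (ihb _ hq)
      | add a b iha ihb =>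
          intro q hq
          rw [map_add, add_smul]
          exact add_mem (iha _ hq) (ihb _ hq)
    rw [eq_top_iff]
    rintro q -
    obtain ⟨a, rfl⟩ := Submodule.Quotient.mk_surjective (I ε) q
    obtain ⟨x, rfl⟩ := RingQuot.mkAlgHom_surjective ℂ (Rel ε) a
    have h1 : (Submodule.Quotient.mk 1 : Q ε) ∈ S := by
      have : vBasis ε (0, 0) = Submodule.Quotient.mk 1 := by
        show (Submodule.Quotient.mk (Tz ε 0 * Omega ε ^ 0) : Q ε) = _
        norm_num [Tz]
      rw [← this]; exact hmem _
    have := hact x _ h1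
    rwa [smul_mk, mul_one] at this
  refine ⟨hli, hspan, fun m k => E_smul_vBasis hε hd m k, ?_⟩
  -- not locally nilpotent
  refine ⟨vBasis ε (1, 0), fun n => ?_⟩
  have hv : vBasis ε (1, 0) ≠ 0 := hli.ne_zero (1, 0)
  have hE1 : E ε • vBasis ε (1, 0) = (ε⁻¹ : ℂ) • vBasis ε (1, 0) := by
    rw [E_smul_vBasis hε hd 1 0]
    norm_num
  have hiter : ∀ n : ℕ, (fun x : Q ε => E ε • x - x)^[n] (vBasis ε (1, 0))
      = (ε⁻¹ - 1) ^ n • vBasis ε (1, 0) := by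
    intro n
    induction n with
    | zero =>
        rw [Function.iterate_zero_apply, pow_zero]
        module
    | succ n ih =>
        rw [Function.iterate_succ_apply', ih]
        show E ε • ((ε⁻¹ - 1) ^ n • vBasis ε (1, 0)) - (ε⁻¹ - 1) ^ n • vBasis ε (1, 0) = _
        rw [smul_csmul, hE1]
        match_scalars
        ring
  have hne : (ε⁻¹ - 1 : ℂ) ≠ 0 := by
    intro h
    rw [sub_eq_zero] at h
    apply hroot 1 (by norm_num)
    rw [pow_one, ← inv_inv ε, h, inv_one]
  rw [hiter n]
  intro hcon
  apply hv
  have hc : ((ε⁻¹ - 1 : ℂ) ^ n) ≠ 0 := pow_ne_zero n hne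
  rw [show vBasis ε (1, 0) = Submodule.Quotient.mk (Tz ε 1 * Omega ε ^ 0) from rfl, csmul_mk,
    Submodule.Quotient.mk_eq_zero] at hcon
  show (Submodule.Quotient.mk (Tz ε 1 * Omega ε ^ 0) : Q ε) = 0
  rw [Submodule.Quotient.mk_eq_zero]
  have hx : (Tz ε 1 * Omega ε ^ 0 : Alg ε)
      = ((ε⁻¹ - 1) ^ n)⁻¹ • (((ε⁻¹ - 1) ^ n) • (Tz ε 1 * Omega ε ^ 0)) :=
    (inv_smul_smul₀ hc _).symm
  rw [hx]
  exact Submodule.smul_of_tower_mem _ _ hcon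
end
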